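/- arXiv:1302.0276 — 2 statements merged into one kernel-verified Lean document; each statement's English description precedes it below -/
import Mathlib

section
/- If v : ℝ^N → ℝ is measurable with |v(x)| ≤ C/(1+|x|)^ν for some C > 0 and ν ≥ 0, and 0 < 2s < N, then there exists C' > 0 such that for all x ∈ ℝ^N, |∫_{ℝ^N} (1+|y|²)^{−2s} |x−y|^{−(N−2s)} v(y) dy| ≤ C'/(1+|x|)^{min(ν+2s, N−2s)}, provided ν + 2s ≠ N − 2s (to avoid a logarithmic correction, assume min(ν+2s, N−2s) is attained strictly). -/
open MeasureTheory

namespace ConvDecayAux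

open Metric Set ENNReal

variable {N : ℕ}

lemma lint_comp_smul (R : ℝ) (hR : 0 < R) (g : EuclideanSpace ℝ (Fin N) → ℝ≥0∞)
    (hg : Measurable g) :
    ∫⁻ w : EuclideanSpace ℝ (Fin N), g (R • w) = ENNReal.ofReal ((R ^ N)⁻¹) * ∫⁻ z, g z := by
  have h1 : Measurable fun w : EuclideanSpace ℝ (Fin N) => R • w := measurable_const_smul R
  rw [← lintegral_map hg h1, Measure.map_addHaar_smul volume hR.ne', lintegral_smul_measure,
    finrank_euclideanSpace_fin, abs_of_nonneg (by positivity), smul_eq_mul]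

lemma lint_scale (c R : ℝ) (hR : 0 < R) (s t : Set (EuclideanSpace ℝ (Fin N)))
    (hs : MeasurableSet s) (ht : MeasurableSet t)
    (hmem : ∀ w : EuclideanSpace ℝ (Fin N), R • w ∈ t ↔ w ∈ s) :
    ∫⁻ z in t, ENNReal.ofReal (‖z‖ ^ c) =
      ENNReal.ofReal (R ^ ((N : ℝ) + c)) * ∫⁻ z in s, ENNReal.ofReal (‖z‖ ^ c) := by
  set g : EuclideanSpace ℝ (Fin N) → ℝ≥0∞ := t.indicator fun z => ENNReal.ofReal (‖z‖ ^ c) with hgdef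
  have hgm : Measurable g := (by fun_prop : Measurable fun z : EuclideanSpace ℝ (Fin N) =>
    ENNReal.ofReal (‖z‖ ^ c)).indicator ht
  have key := lint_comp_smul R hR g hgm
  have hcomp : ∀ w : EuclideanSpace ℝ (Fin N), g (R • w) =
      ENNReal.ofReal (R ^ c) * s.indicator (fun z => ENNReal.ofReal (‖z‖ ^ c)) w := by
    intro w
    by_cases hw : w ∈ s
    · rw [hgdef, indicator_of_mem ((hmem w).2 hw), indicator_of_mem hw, ← ENNReal.ofReal_mul
        (by positivity), norm_smul, Real.norm_eq_abs, abs_of_pos hR,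
        Real.mul_rpow hR.le (norm_nonneg _)]
    · rw [hgdef, indicator_of_notMem (fun h => hw ((hmem w).1 h)), indicator_of_notMem hw,
        mul_zero]
  rw [funext hcomp] at key
  rw [lintegral_const_mul' _ _ ENNReal.ofReal_ne_top, lintegral_indicator hs] at key
  have hfin : ∫⁻ z in t, ENNReal.ofReal (‖z‖ ^ c) = ∫⁻ z, g z := (lintegral_indicator ht _).symm
  rw [hfin]
  calc ∫⁻ z, g z
      = (ENNReal.ofReal (R ^ N) * ENNReal.ofReal ((R ^ N)⁻¹)) * ∫⁻ z, g z := by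
        rw [← ENNReal.ofReal_mul (by positivity), mul_inv_cancel₀ (by positivity),
          ENNReal.ofReal_one, one_mul]
    _ = ENNReal.ofReal (R ^ N) *
        (ENNReal.ofReal (R ^ c) * ∫⁻ z in s, ENNReal.ofReal (‖z‖ ^ c)) := by
        rw [mul_assoc, ← key]
    _ = ENNReal.ofReal (R ^ ((N : ℝ) + c)) * ∫⁻ z in s, ENNReal.ofReal (‖z‖ ^ c) := by
        rw [← mul_assoc, ← ENNReal.ofReal_mul (by positivity)]
        congr 2
        rw [Real.rpow_add hR, Real.rpow_natCast]


lemma lint_ball_scale (c R : ℝ) (hR : 0 < R) :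
    ∫⁻ z in ball (0 : EuclideanSpace ℝ (Fin N)) R, ENNReal.ofReal (‖z‖ ^ c) =
      ENNReal.ofReal (R ^ ((N : ℝ) + c)) *
        ∫⁻ z in ball (0 : EuclideanSpace ℝ (Fin N)) 1, ENNReal.ofReal (‖z‖ ^ c) := by
  refine lint_scale c R hR _ _ measurableSet_ball measurableSet_ball fun w => ?_
  rw [mem_ball_zero_iff, mem_ball_zero_iff, norm_smul, Real.norm_eq_abs, abs_of_pos hR,
    mul_lt_iff_lt_one_right hR]

lemma lint_compl_scale (c R : ℝ) (hR : 0 < R) :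
    ∫⁻ z in (ball (0 : EuclideanSpace ℝ (Fin N)) R)ᶜ, ENNReal.ofReal (‖z‖ ^ c) =
      ENNReal.ofReal (R ^ ((N : ℝ) + c)) *
        ∫⁻ z in (ball (0 : EuclideanSpace ℝ (Fin N)) 1)ᶜ, ENNReal.ofReal (‖z‖ ^ c) := by
  refine lint_scale c R hR _ _ measurableSet_ball.compl measurableSet_ball.compl fun w => ?_
  simp only [Set.mem_compl_iff, mem_ball_zero_iff, norm_smul, Real.norm_eq_abs, abs_of_pos hR,
    mul_lt_iff_lt_one_right hR]

lemma Ofin (q : ℝ) (hq : (N : ℝ) < q) :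
    ∫⁻ z in (ball (0 : EuclideanSpace ℝ (Fin N)) 1)ᶜ, ENNReal.ofReal (‖z‖ ^ (-q)) < ⊤ := by
  have hq0 : 0 < q := lt_of_le_of_lt (Nat.cast_nonneg N) hq
  have hpt : ∀ z ∈ (ball (0 : EuclideanSpace ℝ (Fin N)) 1)ᶜ,
      ENNReal.ofReal (‖z‖ ^ (-q)) ≤ ENNReal.ofReal ((2:ℝ) ^ q * (1 + ‖z‖) ^ (-q)) := by
    intro z hz
    rw [Set.mem_compl_iff, mem_ball_zero_iff, not_lt] at hz
    have hz0 : (0:ℝ) < ‖z‖ := lt_of_lt_of_le one_pos hz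
    apply ENNReal.ofReal_le_ofReal
    have h2 : (1 + ‖z‖) ≤ 2 * ‖z‖ := by linarith
    have h3 : (1 + ‖z‖) ^ (-q) ≥ (2 * ‖z‖) ^ (-q) :=
      Real.rpow_le_rpow_of_nonpos (by positivity) h2 (by linarith)
    calc ‖z‖ ^ (-q) = (2:ℝ) ^ q * ((2:ℝ) ^ (-q) * ‖z‖ ^ (-q)) := by
          rw [← mul_assoc, ← Real.rpow_add two_pos]
          simp
      _ = (2:ℝ) ^ q * (2 * ‖z‖) ^ (-q) := by
          rw [Real.mul_rpow (by positivity) (by positivity)]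
      _ ≤ (2:ℝ) ^ q * (1 + ‖z‖) ^ (-q) := by
          exact mul_le_mul_of_nonneg_left h3 (by positivity)
  calc ∫⁻ z in (ball (0 : EuclideanSpace ℝ (Fin N)) 1)ᶜ, ENNReal.ofReal (‖z‖ ^ (-q))
      ≤ ∫⁻ z in (ball (0 : EuclideanSpace ℝ (Fin N)) 1)ᶜ,
          ENNReal.ofReal ((2:ℝ) ^ q * (1 + ‖z‖) ^ (-q)) :=
        setLIntegral_mono' measurableSet_ball.compl hpt
    _ ≤ ∫⁻ z : EuclideanSpace ℝ (Fin N), ENNReal.ofReal ((2:ℝ) ^ q * (1 + ‖z‖) ^ (-q)) :=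
        setLIntegral_le_lintegral _ _
    _ = ENNReal.ofReal ((2:ℝ) ^ q) *
          ∫⁻ z : EuclideanSpace ℝ (Fin N), ENNReal.ofReal ((1 + ‖z‖) ^ (-q)) := by
        simp_rw [ENNReal.ofReal_mul (by positivity : (0:ℝ) ≤ (2:ℝ) ^ q)]
        exact lintegral_const_mul' _ _ ENNReal.ofReal_ne_top
    _ < ⊤ := by
        apply ENNReal.mul_lt_top ENNReal.ofReal_lt_top
        have := finite_integral_one_add_norm (E := EuclideanSpace ℝ (Fin N))
          (μ := volume) (r := q) (by rwa [finrank_euclideanSpace_fin])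
        exact this


lemma Ifin (hN1 : 1 ≤ N) (b : ℝ) (hb0 : 0 < b) (hbN : b < N) :
    ∫⁻ z in ball (0 : EuclideanSpace ℝ (Fin N)) 1, ENNReal.ofReal (‖z‖ ^ (-b)) < ⊤ := by
  classical
  haveI : Nontrivial (EuclideanSpace ℝ (Fin N)) := by
    apply Module.nontrivial_of_finrank_pos (R := ℝ)
    rw [finrank_euclideanSpace_fin]
    exact hN1
  set V : ℝ≥0∞ := volume (ball (0 : EuclideanSpace ℝ (Fin N)) 1) with hV
  set r : ℕ → ℝ := fun k => ((2 : ℝ)⁻¹) ^ k with hrdef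
  have hrpos : ∀ k, 0 < r k := fun k => by rw [hrdef]; positivity
  have hrrpow : ∀ k : ℕ, r k = (2 : ℝ) ^ (-(k : ℝ)) := by
    intro k
    rw [hrdef, Real.rpow_neg (by norm_num), Real.rpow_natCast, ← inv_pow]
  set S : ℕ → Set (EuclideanSpace ℝ (Fin N)) :=
    fun k => ball 0 (r k) \ ball 0 (r (k + 1)) with hSdef
  have hScov : ball (0 : EuclideanSpace ℝ (Fin N)) 1 ⊆ {0} ∪ ⋃ k, S k := by
    intro z hz
    rcases eq_or_ne z 0 with hz0 | hz0
    · exact Or.inl hz0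
    right
    have hz0' : (0 : ℝ) < ‖z‖ := norm_pos_iff.2 hz0
    have hz1 : ‖z‖ < 1 := mem_ball_zero_iff.1 hz
    have hex : ∃ n, r (n + 1) ≤ ‖z‖ := by
      obtain ⟨n, hn⟩ := exists_pow_lt_of_lt_one hz0' (by norm_num : (2 : ℝ)⁻¹ < 1)
      refine ⟨n, le_of_lt (lt_of_le_of_lt ?_ hn)⟩
      exact pow_le_pow_of_le_one (by norm_num) (by norm_num) (Nat.le_succ n)
    set k := Nat.find hex with hk
    have hk1 : r (k + 1) ≤ ‖z‖ := Nat.find_spec hex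
    have hk2 : ‖z‖ < r k := by
      rcases Nat.eq_zero_or_pos k with h0 | h0
      · rw [h0]; simpa [hrdef] using hz1
      · obtain ⟨m, hm⟩ := Nat.exists_eq_succ_of_ne_zero h0.ne'
        have := Nat.find_min hex (m := m) (by omega)
        rw [hm]
        exact lt_of_not_ge this
    exact Set.mem_iUnion.2 ⟨k, mem_ball_zero_iff.2 hk2,
      fun h => not_lt.2 hk1 (mem_ball_zero_iff.1 h)⟩
  set f : EuclideanSpace ℝ (Fin N) → ℝ≥0∞ := fun z => ENNReal.ofReal (‖z‖ ^ (-b)) with hfdef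
  have hterm : ∀ k, ∫⁻ z in S k, f z ≤
      (ENNReal.ofReal ((2 : ℝ) ^ b) * V) * (ENNReal.ofReal ((2 : ℝ) ^ (b - (N : ℝ)))) ^ k := by
    intro k
    have hSm : MeasurableSet (S k) := measurableSet_ball.diff measurableSet_ball
    have hub : ∀ z ∈ S k, f z ≤ ENNReal.ofReal ((r (k + 1)) ^ (-b)) := by
      intro z hz
      apply ENNReal.ofReal_le_ofReal
      exact Real.rpow_le_rpow_of_nonpos (hrpos (k + 1))
        (not_lt.1 fun h => hz.2 (mem_ball_zero_iff.2 h)) (neg_nonpos.2 hb0.le)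
    calc ∫⁻ z in S k, f z ≤ ∫⁻ _ in S k, ENNReal.ofReal ((r (k + 1)) ^ (-b)) :=
          setLIntegral_mono' hSm hub
      _ = ENNReal.ofReal ((r (k + 1)) ^ (-b)) * volume (S k) := setLIntegral_const _ _
      _ ≤ ENNReal.ofReal ((r (k + 1)) ^ (-b)) * (ENNReal.ofReal ((r k) ^ N) * V) := by
          apply mul_le_mul_right
          have hb := Measure.addHaar_ball volume (0 : EuclideanSpace ℝ (Fin N)) (hrpos k).le
          rw [finrank_euclideanSpace_fin] at hb
          rw [← hb]
          exact measure_mono Set.diff_subset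
      _ = (ENNReal.ofReal ((2 : ℝ) ^ b) * V) *
            (ENNReal.ofReal ((2 : ℝ) ^ (b - (N : ℝ)))) ^ k := by
          rw [← mul_assoc, ← ENNReal.ofReal_mul (by positivity)]
          have hreal : (r (k + 1)) ^ (-b) * (r k) ^ N =
              (2 : ℝ) ^ b * ((2 : ℝ) ^ (b - (N : ℝ))) ^ k := by
            rw [hrrpow, hrrpow, ← Real.rpow_natCast ((2 : ℝ) ^ (-((k : ℕ) : ℝ))) N,
              ← Real.rpow_natCast ((2 : ℝ) ^ (b - (N : ℝ))) k,
              ← Real.rpow_mul (by norm_num : (0:ℝ) ≤ 2),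
              ← Real.rpow_mul (by norm_num : (0:ℝ) ≤ 2),
              ← Real.rpow_mul (by norm_num : (0:ℝ) ≤ 2),
              ← Real.rpow_add (by norm_num : (0:ℝ) < 2),
              ← Real.rpow_add (by norm_num : (0:ℝ) < 2)]
            congr 1
            push_cast
            ring
          rw [hreal, ENNReal.ofReal_mul (by positivity),
            ENNReal.ofReal_pow (by positivity)]
          ring
  set x : ℝ≥0∞ := ENNReal.ofReal ((2 : ℝ) ^ (b - (N : ℝ))) with hx
  have hx1 : x < 1 := by
    rw [hx]
    rw [← ENNReal.ofReal_one]
    exact ENNReal.ofReal_lt_ofReal_iff_of_nonneg (by positivity) |>.2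
      (Real.rpow_lt_one_of_one_lt_of_neg one_lt_two (by linarith))
  calc ∫⁻ z in ball (0 : EuclideanSpace ℝ (Fin N)) 1, f z
      ≤ ∫⁻ z in ({0} ∪ ⋃ k, S k : Set (EuclideanSpace ℝ (Fin N))), f z :=
        lintegral_mono_set hScov
    _ ≤ (∫⁻ z in ({0} : Set (EuclideanSpace ℝ (Fin N))), f z) + ∫⁻ z in ⋃ k, S k, f z :=
        lintegral_union_le _ _ _
    _ ≤ 0 + ∑' k, ∫⁻ z in S k, f z := by
        gcongr
        · rw [Measure.restrict_eq_zero.2 (measure_singleton 0), lintegral_zero_measure]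
        · exact lintegral_iUnion_le _ _
    _ ≤ 0 + ∑' k, (ENNReal.ofReal ((2 : ℝ) ^ b) * V) * x ^ k := by
        gcongr with k
        exact hterm k
    _ = (ENNReal.ofReal ((2 : ℝ) ^ b) * V) * (1 - x)⁻¹ := by
        rw [zero_add, ENNReal.tsum_mul_left, ENNReal.tsum_geometric]
    _ < ⊤ := by
        apply ENNReal.mul_lt_top
        · exact ENNReal.mul_lt_top ENNReal.ofReal_lt_top measure_ball_lt_top
        · exact ENNReal.inv_lt_top.2 (tsub_pos_of_lt hx1)



lemma div_two_rpow {u : ℝ} (p : ℝ) (hu : 0 < u) : (u / 2) ^ p = (2:ℝ) ^ (-p) * u ^ p := by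
  rw [div_eq_mul_inv, Real.mul_rpow hu.le (by norm_num : (0:ℝ) ≤ 2⁻¹),
    Real.inv_rpow (by norm_num : (0:ℝ) ≤ 2), ← Real.rpow_neg (by norm_num : (0:ℝ) ≤ 2), mul_comm]

lemma two_mul_rpow {u : ℝ} (p : ℝ) (hu : 0 < u) : (2 * u) ^ p = (2:ℝ) ^ p * u ^ p :=
  Real.mul_rpow (by norm_num) hu.le

set_option maxHeartbeats 1000000 in
lemma core (hN1 : 1 ≤ N) (a b : ℝ) (ha : 0 < a) (hb0 : 0 < b) (hbN : b < N)
    (hab : (N : ℝ) < a + b) (haN : a ≠ (N : ℝ)) :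
    ∃ K > (0:ℝ), ∀ x : EuclideanSpace ℝ (Fin N),
      (∫⁻ y, ENNReal.ofReal ((1 + ‖y‖) ^ (-a) * ‖x - y‖ ^ (-b))) ≤
        ENNReal.ofReal (K * (1 + ‖x‖) ^ (-(min (a + b - (N : ℝ)) b))) := by
  classical
  set m := min (a + b - (N : ℝ)) b with hm
  have hm1 : m ≤ a + b - (N : ℝ) := min_le_left _ _
  have hm2 : m ≤ b := min_le_right _ _
  have hm0 : 0 < m := lt_min (by linarith) hb0
  -- the constants
  have hIb := Ifin hN1 b hb0 hbN
  set cb := (∫⁻ z in ball (0 : EuclideanSpace ℝ (Fin N)) 1,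
    ENNReal.ofReal (‖z‖ ^ (-b))).toReal with hcb
  have hcb0 : 0 ≤ cb := ENNReal.toReal_nonneg
  have hcble : ∫⁻ z in ball (0 : EuclideanSpace ℝ (Fin N)) 1, ENNReal.ofReal (‖z‖ ^ (-b)) ≤
      ENNReal.ofReal cb := le_of_eq (ENNReal.ofReal_toReal hIb.ne).symm
  have hOq := Ofin (a + b) hab
  set cq := (∫⁻ z in (ball (0 : EuclideanSpace ℝ (Fin N)) 1)ᶜ,
    ENNReal.ofReal (‖z‖ ^ (-(a + b)))).toReal with hcq
  have hcq0 : 0 ≤ cq := ENNReal.toReal_nonneg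
  have hcqle : ∫⁻ z in (ball (0 : EuclideanSpace ℝ (Fin N)) 1)ᶜ,
      ENNReal.ofReal (‖z‖ ^ (-(a + b))) ≤ ENNReal.ofReal cq :=
    le_of_eq (ENNReal.ofReal_toReal hOq.ne).symm
  set ca := (∫⁻ z in ball (0 : EuclideanSpace ℝ (Fin N)) 1,
    ENNReal.ofReal (‖z‖ ^ (-a))).toReal with hca
  have hca0 : 0 ≤ ca := ENNReal.toReal_nonneg
  set cJ := (∫⁻ y : EuclideanSpace ℝ (Fin N), ENNReal.ofReal ((1 + ‖y‖) ^ (-a))).toReal with hcJ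
  have hcJ0 : 0 ≤ cJ := ENNReal.toReal_nonneg
  set d1 : ℝ := (2:ℝ) ^ (a + b - (N:ℝ)) * cb with hd1
  set d2 : ℝ := if a < N then (2:ℝ) ^ b * ((2:ℝ) ^ ((N:ℝ) - a) * ca) else (2:ℝ) ^ b * cJ with hd2
  set d3 : ℝ := (2:ℝ) ^ b * ((2:ℝ) ^ ((N:ℝ) - a - b) * cq) with hd3
  have hd10 : 0 ≤ d1 := by positivity
  have hd20 : 0 ≤ d2 := by rw [hd2]; split <;> positivity
  have hd30 : 0 ≤ d3 := by positivity
  refine ⟨d1 + d2 + d3 + 1, by positivity, fun x => ?_⟩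
  set u : ℝ := 1 + ‖x‖ with hu
  have hu1 : 1 ≤ u := by rw [hu]; have := norm_nonneg x; linarith
  have hu0 : 0 < u := lt_of_lt_of_le one_pos hu1
  set R : ℝ := u / 2 with hR
  have hR0 : 0 < R := by positivity
  set T : ℝ := 2 * u with hT
  have hT0 : 0 < T := by positivity
  set F : EuclideanSpace ℝ (Fin N) → ℝ≥0∞ :=
    fun y => ENNReal.ofReal ((1 + ‖y‖) ^ (-a) * ‖x - y‖ ^ (-b)) with hF
  have hFm : Measurable F := by rw [hF]; fun_prop
  set S1 : Set (EuclideanSpace ℝ (Fin N)) := ball x R with hS1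
  set S2 : Set (EuclideanSpace ℝ (Fin N)) := ball 0 T \ S1 with hS2
  set S3 : Set (EuclideanSpace ℝ (Fin N)) := (ball (0 : EuclideanSpace ℝ (Fin N)) T)ᶜ with hS3
  have hS1m : MeasurableSet S1 := measurableSet_ball
  have hS2m : MeasurableSet S2 := measurableSet_ball.diff hS1m
  have hS3m : MeasurableSet S3 := measurableSet_ball.compl
  have humono : ∀ p : ℝ, p ≤ -m → u ^ p ≤ u ^ (-m) :=
    fun p hp => Real.rpow_le_rpow_of_exponent_le hu1 hp
  -- splitting
  have hsplit : (∫⁻ y, F y) ≤ (∫⁻ y in S1, F y) + (∫⁻ y in S2, F y) + ∫⁻ y in S3, F y := by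
    have hcov : ∀ y, F y ≤ S1.indicator F y + S2.indicator F y + S3.indicator F y := by
      intro y
      by_cases h1 : y ∈ S1
      · calc F y = S1.indicator F y := (Set.indicator_of_mem h1 F).symm
          _ ≤ _ := le_add_right (le_add_right le_rfl)
      by_cases h2 : y ∈ ball (0 : EuclideanSpace ℝ (Fin N)) T
      · have : y ∈ S2 := ⟨h2, h1⟩
        calc F y = S2.indicator F y := (Set.indicator_of_mem this F).symm
          _ ≤ S1.indicator F y + S2.indicator F y := le_add_self
          _ ≤ _ := le_add_right le_rfl
      · have : y ∈ S3 := h2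
        calc F y = S3.indicator F y := (Set.indicator_of_mem this F).symm
          _ ≤ _ := le_add_self
    calc (∫⁻ y, F y) ≤ ∫⁻ y, (S1.indicator F y + S2.indicator F y + S3.indicator F y) :=
          lintegral_mono hcov
      _ = (∫⁻ y, S1.indicator F y) + (∫⁻ y, S2.indicator F y) + ∫⁻ y, S3.indicator F y := by
          rw [lintegral_add_left (f := fun y => S1.indicator F y + S2.indicator F y) ((hFm.indicator hS1m).add (hFm.indicator hS2m)),
            lintegral_add_left (hFm.indicator hS1m)]
      _ = _ := by rw [lintegral_indicator hS1m, lintegral_indicator hS2m, lintegral_indicator hS3m]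
  -- piece 1
  have hP1 : (∫⁻ y in S1, F y) ≤ ENNReal.ofReal (d1 * u ^ (-m)) := by
    have hpt : ∀ y ∈ S1, F y ≤
        ENNReal.ofReal (R ^ (-a)) * ENNReal.ofReal (‖x - y‖ ^ (-b)) := by
      intro y hy
      show ENNReal.ofReal ((1 + ‖y‖) ^ (-a) * ‖x - y‖ ^ (-b)) ≤ _
      rw [ENNReal.ofReal_mul (by positivity)]
      apply mul_le_mul_left
      apply ENNReal.ofReal_le_ofReal
      have hdy : ‖y - x‖ < R := mem_ball_iff_norm.1 hy
      have hle : R ≤ 1 + ‖y‖ := by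
        have h1 : ‖x‖ - ‖y‖ ≤ ‖y - x‖ := by
          rw [norm_sub_rev]
          exact norm_sub_norm_le x y
        have : u - R ≤ 1 + ‖y‖ := by rw [hu] at *; linarith
        have hRu : u - R = R := by rw [hR]; ring
        linarith [hRu ▸ this]
      exact Real.rpow_le_rpow_of_nonpos hR0 hle (neg_nonpos.2 ha.le)
    have htrans : (∫⁻ y in S1, ENNReal.ofReal (‖x - y‖ ^ (-b))) =
        ∫⁻ z in ball (0 : EuclideanSpace ℝ (Fin N)) R, ENNReal.ofReal (‖z‖ ^ (-b)) := by
      set h : EuclideanSpace ℝ (Fin N) → ℝ≥0∞ :=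
        (ball (0 : EuclideanSpace ℝ (Fin N)) R).indicator
          (fun z => ENNReal.ofReal (‖z‖ ^ (-b))) with hhdef
      have hhm : Measurable h :=
        (by fun_prop : Measurable fun z : EuclideanSpace ℝ (Fin N) =>
          ENNReal.ofReal (‖z‖ ^ (-b))).indicator measurableSet_ball
      have e1 : (∫⁻ y in S1, ENNReal.ofReal (‖x - y‖ ^ (-b))) = ∫⁻ y, h (x - y) := by
        rw [← lintegral_indicator hS1m]
        congr 1
        funext y
        by_cases hy : y ∈ S1
        · have hxy : x - y ∈ ball (0 : EuclideanSpace ℝ (Fin N)) R := by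
            rw [mem_ball_zero_iff, ← norm_sub_rev]
            exact mem_ball_iff_norm.1 hy
          rw [Set.indicator_of_mem hy, hhdef, Set.indicator_of_mem hxy]
        · have hxy : x - y ∉ ball (0 : EuclideanSpace ℝ (Fin N)) R := by
            rw [mem_ball_zero_iff, ← norm_sub_rev]
            exact fun h => hy (mem_ball_iff_norm.2 h)
          rw [Set.indicator_of_notMem hy, hhdef, Set.indicator_of_notMem hxy]
      rw [e1, (Measure.measurePreserving_sub_left volume x).lintegral_comp hhm,
        hhdef, lintegral_indicator measurableSet_ball]
    calc (∫⁻ y in S1, F y)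
        ≤ ∫⁻ y in S1, ENNReal.ofReal (R ^ (-a)) * ENNReal.ofReal (‖x - y‖ ^ (-b)) :=
          setLIntegral_mono' hS1m hpt
      _ = ENNReal.ofReal (R ^ (-a)) * ∫⁻ y in S1, ENNReal.ofReal (‖x - y‖ ^ (-b)) :=
          lintegral_const_mul' _ _ ENNReal.ofReal_ne_top
      _ = ENNReal.ofReal (R ^ (-a)) *
            (ENNReal.ofReal (R ^ ((N:ℝ) + -b)) *
              ∫⁻ z in ball (0 : EuclideanSpace ℝ (Fin N)) 1, ENNReal.ofReal (‖z‖ ^ (-b))) := by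
          rw [htrans, lint_ball_scale (-b) R hR0]
      _ ≤ ENNReal.ofReal (R ^ (-a)) *
            (ENNReal.ofReal (R ^ ((N:ℝ) + -b)) * ENNReal.ofReal cb) := by
          exact mul_le_mul_right (mul_le_mul_right hcble _) _
      _ = ENNReal.ofReal (R ^ (-a) * (R ^ ((N:ℝ) + -b) * cb)) := by
          rw [ENNReal.ofReal_mul (by positivity), ENNReal.ofReal_mul (by positivity)]
      _ ≤ ENNReal.ofReal (d1 * u ^ (-m)) := by
          apply ENNReal.ofReal_le_ofReal
          have h1 : R ^ (-a) * (R ^ ((N:ℝ) + -b) * cb) = R ^ ((N:ℝ) - a - b) * cb := by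
            rw [← mul_assoc, ← Real.rpow_add hR0]
            congr 2
            ring
          have h2 : R ^ ((N:ℝ) - a - b) = (2:ℝ) ^ (a + b - (N:ℝ)) * u ^ ((N:ℝ) - a - b) := by
            rw [hR, Real.div_rpow hu0.le (by norm_num : (0:ℝ) ≤ 2), div_eq_mul_inv,
              ← Real.rpow_neg (by norm_num : (0:ℝ) ≤ 2)]
            rw [neg_sub]
            have : a + b - (N:ℝ) = -((N:ℝ) - a - b) := by ring
            rw [this, mul_comm]
            congr 2
            ring
          rw [h1, h2]
          have h3 : u ^ ((N:ℝ) - a - b) ≤ u ^ (-m) := humono _ (by linarith)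
          calc (2:ℝ) ^ (a + b - (N:ℝ)) * u ^ ((N:ℝ) - a - b) * cb
              ≤ (2:ℝ) ^ (a + b - (N:ℝ)) * u ^ (-m) * cb := by
                apply mul_le_mul_of_nonneg_right _ hcb0
                exact mul_le_mul_of_nonneg_left h3 (by positivity)
            _ = d1 * u ^ (-m) := by rw [hd1]; ring

  have hP2 : (∫⁻ y in S2, F y) ≤ ENNReal.ofReal (d2 * u ^ (-m)) := by
    haveI : Nontrivial (EuclideanSpace ℝ (Fin N)) := by
      apply Module.nontrivial_of_finrank_pos (R := ℝ)
      rw [finrank_euclideanSpace_fin]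
      exact hN1
    have hpt : ∀ y ∈ S2, F y ≤
        ENNReal.ofReal (R ^ (-b)) * ENNReal.ofReal ((1 + ‖y‖) ^ (-a)) := by
      intro y hy
      show ENNReal.ofReal ((1 + ‖y‖) ^ (-a) * ‖x - y‖ ^ (-b)) ≤ _
      rw [mul_comm ((1 + ‖y‖) ^ (-a)), ENNReal.ofReal_mul (by positivity)]
      apply mul_le_mul_left
      apply ENNReal.ofReal_le_ofReal
      have hyx : R ≤ ‖x - y‖ := by
        have h1 : y ∉ S1 := hy.2
        rw [hS1, mem_ball_iff_norm] at h1
        rw [norm_sub_rev]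
        exact not_lt.1 h1
      exact Real.rpow_le_rpow_of_nonpos hR0 hyx (neg_nonpos.2 hb0.le)
    have step1 : (∫⁻ y in S2, F y) ≤ ENNReal.ofReal (R ^ (-b)) *
        ∫⁻ y in ball (0 : EuclideanSpace ℝ (Fin N)) T,
          ENNReal.ofReal ((1 + ‖y‖) ^ (-a)) := by
      calc (∫⁻ y in S2, F y)
          ≤ ∫⁻ y in S2, ENNReal.ofReal (R ^ (-b)) * ENNReal.ofReal ((1 + ‖y‖) ^ (-a)) :=
            setLIntegral_mono' hS2m hpt
        _ = ENNReal.ofReal (R ^ (-b)) * ∫⁻ y in S2, ENNReal.ofReal ((1 + ‖y‖) ^ (-a)) :=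
            lintegral_const_mul' _ _ ENNReal.ofReal_ne_top
        _ ≤ _ := mul_le_mul_right (lintegral_mono_set Set.diff_subset) _
    by_cases hcase : a < (N : ℝ)
    · have hIa := Ifin hN1 a ha hcase
      have hz : (∫⁻ y in ball (0 : EuclideanSpace ℝ (Fin N)) T,
          ENNReal.ofReal ((1 + ‖y‖) ^ (-a))) ≤
          ENNReal.ofReal (T ^ ((N:ℝ) + -a)) * ENNReal.ofReal ca := by
        have e0 : (∫⁻ y in ball (0 : EuclideanSpace ℝ (Fin N)) T,
            ENNReal.ofReal ((1 + ‖y‖) ^ (-a))) =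
            ∫⁻ y in ball (0 : EuclideanSpace ℝ (Fin N)) T \ {0},
              ENNReal.ofReal ((1 + ‖y‖) ^ (-a)) :=
          (setLIntegral_congr (diff_null_ae_eq_self (measure_singleton _))).symm
        have e1 : (∫⁻ y in ball (0 : EuclideanSpace ℝ (Fin N)) T \ {0},
            ENNReal.ofReal ((1 + ‖y‖) ^ (-a))) ≤
            ∫⁻ y in ball (0 : EuclideanSpace ℝ (Fin N)) T \ {0},
              ENNReal.ofReal (‖y‖ ^ (-a)) := by
          apply setLIntegral_mono' (measurableSet_ball.diff (measurableSet_singleton _))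
          intro y hy
          apply ENNReal.ofReal_le_ofReal
          have hy0 : 0 < ‖y‖ := norm_pos_iff.2 fun h0 => hy.2 (by simp [h0])
          exact Real.rpow_le_rpow_of_nonpos hy0 (by linarith) (neg_nonpos.2 ha.le)
        have e2 : (∫⁻ y in ball (0 : EuclideanSpace ℝ (Fin N)) T \ {0},
            ENNReal.ofReal (‖y‖ ^ (-a))) ≤
            ∫⁻ y in ball (0 : EuclideanSpace ℝ (Fin N)) T, ENNReal.ofReal (‖y‖ ^ (-a)) :=
          lintegral_mono_set Set.diff_subset
        rw [e0]
        refine le_trans (le_trans e1 e2) ?_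
        rw [lint_ball_scale (-a) T hT0]
        exact mul_le_mul_right (le_of_eq (ENNReal.ofReal_toReal hIa.ne).symm) _
      calc (∫⁻ y in S2, F y)
          ≤ ENNReal.ofReal (R ^ (-b)) *
              (ENNReal.ofReal (T ^ ((N:ℝ) + -a)) * ENNReal.ofReal ca) :=
            step1.trans (mul_le_mul_right hz _)
        _ = ENNReal.ofReal (R ^ (-b) * (T ^ ((N:ℝ) + -a) * ca)) := by
            rw [ENNReal.ofReal_mul (by positivity), ENNReal.ofReal_mul (by positivity)]
        _ ≤ ENNReal.ofReal (d2 * u ^ (-m)) := by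
            apply ENNReal.ofReal_le_ofReal
            have hmulu : u ^ (-b) * u ^ ((N:ℝ) + -a) = u ^ ((N:ℝ) - a - b) := by
              rw [← Real.rpow_add hu0]
              congr 1
              ring
            have hh : R ^ (-b) * (T ^ ((N:ℝ) + -a) * ca) =
                ((2:ℝ) ^ b * ((2:ℝ) ^ ((N:ℝ) + -a) * ca)) * u ^ ((N:ℝ) - a - b) := by
              rw [hR, hT, div_two_rpow (-b) hu0, two_mul_rpow ((N:ℝ) + -a) hu0, neg_neg,
                ← hmulu]
              ring
            rw [hh, hd2, if_pos hcase]
            have h3 : u ^ ((N:ℝ) - a - b) ≤ u ^ (-m) := humono _ (by linarith)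
            have h4 : (N:ℝ) + -a = (N:ℝ) - a := by ring
            rw [h4]
            exact mul_le_mul_of_nonneg_left h3 (by positivity)
    · have hNa : (N : ℝ) < a := lt_of_le_of_ne (not_lt.1 hcase) (Ne.symm haN)
      have hJ : (∫⁻ y : EuclideanSpace ℝ (Fin N), ENNReal.ofReal ((1 + ‖y‖) ^ (-a))) < ⊤ := by
        have := finite_integral_one_add_norm (E := EuclideanSpace ℝ (Fin N))
          (μ := volume) (r := a) (by rwa [finrank_euclideanSpace_fin])
        exact this
      have hz : (∫⁻ y in ball (0 : EuclideanSpace ℝ (Fin N)) T,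
          ENNReal.ofReal ((1 + ‖y‖) ^ (-a))) ≤ ENNReal.ofReal cJ :=
        le_trans (setLIntegral_le_lintegral _ _) (le_of_eq (ENNReal.ofReal_toReal hJ.ne).symm)
      calc (∫⁻ y in S2, F y)
          ≤ ENNReal.ofReal (R ^ (-b)) * ENNReal.ofReal cJ :=
            step1.trans (mul_le_mul_right hz _)
        _ = ENNReal.ofReal (R ^ (-b) * cJ) := by rw [ENNReal.ofReal_mul (by positivity)]
        _ ≤ ENNReal.ofReal (d2 * u ^ (-m)) := by
            apply ENNReal.ofReal_le_ofReal
            have hh : R ^ (-b) * cJ = ((2:ℝ) ^ b * cJ) * u ^ (-b) := by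
              rw [hR, div_two_rpow (-b) hu0, neg_neg]
              ring
            rw [hh, hd2, if_neg hcase]
            exact mul_le_mul_of_nonneg_left (humono _ (by linarith)) (by positivity)
  have hP3 : (∫⁻ y in S3, F y) ≤ ENNReal.ofReal (d3 * u ^ (-m)) := by
    have hpt : ∀ y ∈ S3, F y ≤
        ENNReal.ofReal ((2:ℝ) ^ b) * ENNReal.ofReal (‖y‖ ^ (-(a + b))) := by
      intro y hy
      show ENNReal.ofReal ((1 + ‖y‖) ^ (-a) * ‖x - y‖ ^ (-b)) ≤ _
      have hyT : T ≤ ‖y‖ := by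
        rw [hS3, Set.mem_compl_iff, mem_ball_zero_iff, not_lt] at hy
        exact hy
      have hy0 : (0:ℝ) < ‖y‖ := lt_of_lt_of_le hT0 hyT
      have hxy : (1 + ‖y‖) / 2 ≤ ‖x - y‖ := by
        have h1 : ‖y‖ - ‖x‖ ≤ ‖x - y‖ := by
          rw [norm_sub_rev]
          exact norm_sub_norm_le y x
        have h2 : ‖x‖ = u - 1 := by rw [hu]; ring
        have h3 : u ≤ ‖y‖ / 2 := by
          rw [hT] at hyT
          linarith
        linarith
      have hb1 : ‖x - y‖ ^ (-b) ≤ ((1 + ‖y‖) / 2) ^ (-b) :=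
        Real.rpow_le_rpow_of_nonpos (by positivity) hxy (neg_nonpos.2 hb0.le)
      rw [← ENNReal.ofReal_mul (by positivity)]
      apply ENNReal.ofReal_le_ofReal
      have h1y : (0:ℝ) < 1 + ‖y‖ := by positivity
      calc (1 + ‖y‖) ^ (-a) * ‖x - y‖ ^ (-b)
          ≤ (1 + ‖y‖) ^ (-a) * ((1 + ‖y‖) / 2) ^ (-b) :=
            mul_le_mul_of_nonneg_left hb1 (by positivity)
        _ = (2:ℝ) ^ b * ((1 + ‖y‖) ^ (-a) * (1 + ‖y‖) ^ (-b)) := by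
            rw [div_two_rpow (-b) h1y, neg_neg]
            ring
        _ = (2:ℝ) ^ b * (1 + ‖y‖) ^ (-(a + b)) := by
            rw [← Real.rpow_add h1y]
            congr 2
            ring
        _ ≤ (2:ℝ) ^ b * ‖y‖ ^ (-(a + b)) := by
            apply mul_le_mul_of_nonneg_left _ (by positivity)
            exact Real.rpow_le_rpow_of_nonpos hy0 (by linarith) (by linarith)
    calc (∫⁻ y in S3, F y)
        ≤ ∫⁻ y in S3, ENNReal.ofReal ((2:ℝ) ^ b) * ENNReal.ofReal (‖y‖ ^ (-(a + b))) :=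
          setLIntegral_mono' hS3m hpt
      _ = ENNReal.ofReal ((2:ℝ) ^ b) * ∫⁻ y in S3, ENNReal.ofReal (‖y‖ ^ (-(a + b))) :=
          lintegral_const_mul' _ _ ENNReal.ofReal_ne_top
      _ = ENNReal.ofReal ((2:ℝ) ^ b) * (ENNReal.ofReal (T ^ ((N:ℝ) + -(a + b))) *
            ∫⁻ z in (ball (0 : EuclideanSpace ℝ (Fin N)) 1)ᶜ,
              ENNReal.ofReal (‖z‖ ^ (-(a + b)))) := by
          rw [hS3, lint_compl_scale (-(a + b)) T hT0]
      _ ≤ ENNReal.ofReal ((2:ℝ) ^ b) *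
            (ENNReal.ofReal (T ^ ((N:ℝ) + -(a + b))) * ENNReal.ofReal cq) :=
          mul_le_mul_right (mul_le_mul_right hcqle _) _
      _ = ENNReal.ofReal ((2:ℝ) ^ b * (T ^ ((N:ℝ) + -(a + b)) * cq)) := by
          rw [ENNReal.ofReal_mul (by positivity), ENNReal.ofReal_mul (by positivity)]
      _ ≤ ENNReal.ofReal (d3 * u ^ (-m)) := by
          apply ENNReal.ofReal_le_ofReal
          have hh : (2:ℝ) ^ b * (T ^ ((N:ℝ) + -(a + b)) * cq) =
              ((2:ℝ) ^ b * ((2:ℝ) ^ ((N:ℝ) - a - b) * cq)) * u ^ ((N:ℝ) + -(a + b)) := by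
            rw [hT, two_mul_rpow ((N:ℝ) + -(a + b)) hu0]
            have he : (N:ℝ) + -(a + b) = (N:ℝ) - a - b := by ring
            rw [he]
            ring
          rw [hh, hd3]
          exact mul_le_mul_of_nonneg_left (humono _ (by linarith)) (by positivity)
  calc (∫⁻ y, F y)
      ≤ ((∫⁻ y in S1, F y) + ∫⁻ y in S2, F y) + ∫⁻ y in S3, F y := hsplit
    _ ≤ (ENNReal.ofReal (d1 * u ^ (-m)) + ENNReal.ofReal (d2 * u ^ (-m))) +
          ENNReal.ofReal (d3 * u ^ (-m)) := add_le_add (add_le_add hP1 hP2) hP3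
    _ = ENNReal.ofReal ((d1 + d2 + d3) * u ^ (-m)) := by
        rw [← ENNReal.ofReal_add (mul_nonneg hd10 (by positivity))
            (mul_nonneg hd20 (by positivity)),
          ← ENNReal.ofReal_add
            (add_nonneg (mul_nonneg hd10 (by positivity)) (mul_nonneg hd20 (by positivity)))
            (mul_nonneg hd30 (by positivity))]
        ring_nf
    _ ≤ ENNReal.ofReal ((d1 + d2 + d3 + 1) * u ^ (-m)) := by
        apply ENNReal.ofReal_le_ofReal
        apply mul_le_mul_of_nonneg_right (by linarith) (by positivity)

end ConvDecayAux

/-- Convolution-type decay estimate: if `|v(x)| ≤ C(1+|x|)^{−ν}`, then the Riesz-type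
integral against the kernel `(1+|y|²)^{−2s}|x−y|^{−(N−2s)}` decays like
`(1+|x|)^{−min(ν+2s, N−2s)}` (away from the borderline case `ν+2s = N−2s`). -/
theorem convolution_decay (N : ℕ) (hN1 : 1 ≤ N) (s ν C : ℝ) (hs0 : 0 < s) (hs1 : s < 1)
    (hN : 2 * s < (N : ℝ)) (hν : 0 ≤ ν) (hC : 0 < C)
    (hne : ν + 2 * s ≠ (N : ℝ) - 2 * s)
    (v : EuclideanSpace ℝ (Fin N) → ℝ) (hv : Measurable v)
    (hbd : ∀ x, |v x| ≤ C / (1 + ‖x‖) ^ ν) :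
    ∃ C' > 0, ∀ x : EuclideanSpace ℝ (Fin N),
      |∫ y, (1 + ‖y‖ ^ 2) ^ (-(2 * s)) * ‖x - y‖ ^ (-((N : ℝ) - 2 * s)) * v y| ≤
        C' / (1 + ‖x‖) ^ min (ν + 2 * s) ((N : ℝ) - 2 * s) := by
  set a : ℝ := ν + 4 * s with hadef
  set b : ℝ := (N : ℝ) - 2 * s with hbdef
  obtain ⟨K, hK0, hK⟩ := ConvDecayAux.core (N := N) hN1 a b (by rw [hadef]; linarith)
    (by rw [hbdef]; linarith) (by rw [hbdef]; push_cast; linarith)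
    (by rw [hadef, hbdef]; linarith)
    (by rw [hadef]; intro h; exact hne (by rw [hbdef] at *; linarith))
  set c0 : ℝ := (2 : ℝ) ^ (2 * s) * C with hc0
  have hc00 : 0 < c0 := by positivity
  have hmin : min (a + b - (N : ℝ)) b = min (ν + 2 * s) b := by
    congr 1
    rw [hadef, hbdef]
    ring
  refine ⟨c0 * K, by positivity, fun x => ?_⟩
  have hu0 : (0 : ℝ) < 1 + ‖x‖ := by positivity
  have key := hK x
  have hptw : ∀ y : EuclideanSpace ℝ (Fin N),
      ENNReal.ofReal ‖(1 + ‖y‖ ^ 2) ^ (-(2 * s)) * ‖x - y‖ ^ (-b) * v y‖ ≤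
      ENNReal.ofReal c0 * ENNReal.ofReal ((1 + ‖y‖) ^ (-a) * ‖x - y‖ ^ (-b)) := by
    intro y
    rw [← ENNReal.ofReal_mul hc00.le]
    apply ENNReal.ofReal_le_ofReal
    have h1y : (0 : ℝ) < 1 + ‖y‖ := by positivity
    have hk1 : (0 : ℝ) < 1 + ‖y‖ ^ 2 := by positivity
    have hK1 : ((1 : ℝ) + ‖y‖ ^ 2) ^ (-(2 * s)) ≤ (2 : ℝ) ^ (2 * s) * (1 + ‖y‖) ^ (-(4 * s)) := by
      have h := rpow_neg_one_add_norm_sq_le (E := EuclideanSpace ℝ (Fin N)) y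
        (r := 4 * s) (by linarith)
      rw [show -(4 * s) / 2 = -(2 * s) by ring, show 4 * s / 2 = 2 * s by ring] at h
      exact h
    have hv1 : |v y| ≤ C * (1 + ‖y‖) ^ (-ν) := by
      have h := hbd y
      rwa [div_eq_mul_inv, ← Real.rpow_neg h1y.le] at h
    rw [Real.norm_eq_abs, abs_mul, abs_mul,
      abs_of_pos (Real.rpow_pos_of_pos hk1 _),
      abs_of_nonneg (Real.rpow_nonneg (norm_nonneg (x - y)) _)]
    calc (1 + ‖y‖ ^ 2) ^ (-(2 * s)) * ‖x - y‖ ^ (-b) * |v y|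
        ≤ ((2 : ℝ) ^ (2 * s) * (1 + ‖y‖) ^ (-(4 * s))) * ‖x - y‖ ^ (-b) *
            (C * (1 + ‖y‖) ^ (-ν)) :=
          mul_le_mul (mul_le_mul_of_nonneg_right hK1
              (Real.rpow_nonneg (norm_nonneg (x - y)) _)) hv1 (abs_nonneg _) (by positivity)
      _ = c0 * ((1 + ‖y‖) ^ (-a) * ‖x - y‖ ^ (-b)) := by
          have hcmb : (1 + ‖y‖) ^ (-(4 * s)) * (1 + ‖y‖) ^ (-ν) = (1 + ‖y‖) ^ (-a) := by
            rw [← Real.rpow_add h1y, hadef]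
            congr 1
            ring
          rw [hc0, ← hcmb]
          ring
  calc |∫ y, (1 + ‖y‖ ^ 2) ^ (-(2 * s)) * ‖x - y‖ ^ (-b) * v y|
      ≤ (∫⁻ y, ENNReal.ofReal
          ‖(1 + ‖y‖ ^ 2) ^ (-(2 * s)) * ‖x - y‖ ^ (-b) * v y‖).toReal := by
        rw [← Real.norm_eq_abs]
        exact norm_integral_le_lintegral_norm _
    _ ≤ (ENNReal.ofReal (c0 * (K * (1 + ‖x‖) ^ (-(min (a + b - (N : ℝ)) b))))).toReal := by
        apply ENNReal.toReal_mono ENNReal.ofReal_ne_top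
        calc (∫⁻ y, ENNReal.ofReal
              ‖(1 + ‖y‖ ^ 2) ^ (-(2 * s)) * ‖x - y‖ ^ (-b) * v y‖)
            ≤ ∫⁻ y, ENNReal.ofReal c0 *
                ENNReal.ofReal ((1 + ‖y‖) ^ (-a) * ‖x - y‖ ^ (-b)) := lintegral_mono hptw
          _ = ENNReal.ofReal c0 *
                ∫⁻ y, ENNReal.ofReal ((1 + ‖y‖) ^ (-a) * ‖x - y‖ ^ (-b)) :=
              lintegral_const_mul' _ _ ENNReal.ofReal_ne_top
          _ ≤ ENNReal.ofReal c0 *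
                ENNReal.ofReal (K * (1 + ‖x‖) ^ (-(min (a + b - (N : ℝ)) b))) :=
              mul_le_mul_right key _
          _ = ENNReal.ofReal (c0 * (K * (1 + ‖x‖) ^ (-(min (a + b - (N : ℝ)) b)))) :=
              (ENNReal.ofReal_mul hc00.le).symm
    _ ≤ c0 * K / (1 + ‖x‖) ^ min (ν + 2 * s) b := by
        rw [ENNReal.toReal_ofReal (by positivity), hmin, Real.rpow_neg hu0.le, div_eq_mul_inv]
        apply le_of_eq
        ring
end

section
/- Suppose h : S^N → ℝ is a bounded measurable function satisfying a·h(ω) = ∫_{S^N} |ω−η|^{−(N−2s)} h(η) dη for almost every ω, with a ≠ 0 and 0 < 2s < N. Then h agrees almost everywhere with a continuous function on S^N. -/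
set_option maxHeartbeats 1000000

open MeasureTheory Metric Set
open scoped Pointwise ENNReal

noncomputable def capC (N : ℕ) : ℝ≥0∞ :=
  (N + 1 : ℝ≥0∞) * ENNReal.ofReal (3 * 2 ^ (N + 1)) *
    volume (Metric.ball (0 : EuclideanSpace ℝ (Fin (N + 1))) 1)

lemma capC_lt_top (N : ℕ) : capC N < ∞ := by
  refine ENNReal.mul_lt_top (ENNReal.mul_lt_top ?_ ENNReal.ofReal_lt_top) measure_ball_lt_top
  simp [lt_top_iff_ne_top]

lemma cap_bound (N : ℕ) (ω : sphere (0 : EuclideanSpace ℝ (Fin (N + 1))) 1) {ρ : ℝ}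
    (hρ0 : 0 < ρ) (hρ1 : ρ ≤ 1) :
    (volume : Measure (EuclideanSpace ℝ (Fin (N + 1)))).toSphere
      {η : sphere (0 : EuclideanSpace ℝ (Fin (N + 1))) 1 |
        ‖(η : EuclideanSpace ℝ (Fin (N + 1))) - (ω : EuclideanSpace ℝ (Fin (N + 1)))‖ ≤ ρ}
      ≤ capC N * ENNReal.ofReal (ρ ^ N) := by
  classical
  have hωn : ‖(ω : EuclideanSpace ℝ (Fin (N + 1)))‖ = 1 := mem_sphere_zero_iff_norm.mp ω.2
  have hsmeas : MeasurableSet {η : sphere (0 : EuclideanSpace ℝ (Fin (N + 1))) 1 |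
      ‖(η : EuclideanSpace ℝ (Fin (N + 1))) - (ω : EuclideanSpace ℝ (Fin (N + 1)))‖ ≤ ρ} := by
    refine (isClosed_le ?_ continuous_const).measurableSet
    exact (continuous_subtype_val.sub continuous_const).norm
  rw [Measure.toSphere_apply' _ hsmeas]
  set n : ℕ := ⌈1 / ρ⌉₊ with hn
  have hn0 : 0 < n := Nat.ceil_pos.mpr (by positivity)
  have hnn : (0 : ℝ) < n := by exact_mod_cast hn0
  have hnρ : 1 / (n : ℝ) ≤ ρ := by
    rw [div_le_iff₀ hnn]
    have h1 : 1 / ρ ≤ (n : ℝ) := Nat.le_ceil _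
    calc (1 : ℝ) = ρ * (1 / ρ) := by field_simp
    _ ≤ ρ * n := by gcongr
  have hcover : Set.Ioo (0 : ℝ) 1 • ((↑) '' {η : sphere (0 : EuclideanSpace ℝ (Fin (N + 1))) 1 |
        ‖(η : EuclideanSpace ℝ (Fin (N + 1))) - (ω : EuclideanSpace ℝ (Fin (N + 1)))‖ ≤ ρ}) ⊆
      ⋃ k ∈ Finset.range (n + 1),
        Metric.closedBall (((k : ℝ) / (n : ℝ)) • (ω : EuclideanSpace ℝ (Fin (N + 1)))) (2 * ρ) := by
    rintro x hx
    rw [Set.mem_smul] at hx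
    obtain ⟨t, ht, y, hy, rfl⟩ := hx
    obtain ⟨η, hη, rfl⟩ := hy
    obtain ⟨ht0, ht1⟩ := ht
    set k : ℕ := ⌊t * n⌋₊ with hk
    have hk1 : (k : ℝ) ≤ t * n := Nat.floor_le (by positivity)
    have hk2 : t * n < (k : ℝ) + 1 := Nat.lt_floor_add_one _
    have hkn : k < n + 1 := by
      have h : (k : ℝ) < n := lt_of_le_of_lt hk1 (by nlinarith)
      have := Nat.cast_lt (α := ℝ) |>.mp h
      omega
    refine Set.mem_iUnion₂.mpr ⟨k, Finset.mem_range.mpr hkn, ?_⟩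
    rw [Metric.mem_closedBall, dist_eq_norm]
    have hkt : (k : ℝ) / n ≤ t := by rw [div_le_iff₀ hnn]; exact hk1
    have hkt2 : t - (k : ℝ) / n ≤ 1 / n := by
      rw [sub_le_iff_le_add, ← add_div, le_div_iff₀ hnn]
      nlinarith
    have hsplit : t • (η : EuclideanSpace ℝ (Fin (N + 1))) -
        ((k : ℝ) / n) • (ω : EuclideanSpace ℝ (Fin (N + 1))) =
        t • ((η : EuclideanSpace ℝ (Fin (N + 1))) - ω) +
        (t - (k : ℝ) / n) • (ω : EuclideanSpace ℝ (Fin (N + 1))) := by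
      rw [smul_sub, sub_smul]; abel
    rw [hsplit]
    calc ‖t • ((η : EuclideanSpace ℝ (Fin (N + 1))) - ω) +
          (t - (k : ℝ) / n) • (ω : EuclideanSpace ℝ (Fin (N + 1)))‖
        ≤ ‖t • ((η : EuclideanSpace ℝ (Fin (N + 1))) - ω)‖ +
          ‖(t - (k : ℝ) / n) • (ω : EuclideanSpace ℝ (Fin (N + 1)))‖ := norm_add_le _ _
      _ = |t| * ‖(η : EuclideanSpace ℝ (Fin (N + 1))) - ω‖ + |t - (k : ℝ) / n| * 1 := by
          rw [norm_smul, norm_smul, hωn, Real.norm_eq_abs, Real.norm_eq_abs]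
      _ ≤ 2 * ρ := by
          have hη' : ‖(η : EuclideanSpace ℝ (Fin (N + 1))) - ω‖ ≤ ρ := hη
          have e1 : |t| * ‖(η : EuclideanSpace ℝ (Fin (N + 1))) - ω‖ ≤ 1 * ρ :=
            mul_le_mul (by rw [abs_of_pos ht0]; exact ht1.le) hη' (norm_nonneg _) one_pos.le
          have e2 : |t - (k : ℝ) / n| ≤ 1 / n := by
            rw [abs_of_nonneg (sub_nonneg.mpr hkt)]; exact hkt2
          linarith
  calc ((Module.finrank ℝ (EuclideanSpace ℝ (Fin (N + 1)))) : ℝ≥0∞) *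
        volume (Set.Ioo (0 : ℝ) 1 • (Subtype.val '' {η : sphere (0 : EuclideanSpace ℝ (Fin (N + 1))) 1 |
          ‖(η : EuclideanSpace ℝ (Fin (N + 1))) - (ω : EuclideanSpace ℝ (Fin (N + 1)))‖ ≤ ρ}))
      ≤ (N + 1 : ℝ≥0∞) * ∑ k ∈ Finset.range (n + 1),
          volume (Metric.closedBall (((k : ℝ) / (n : ℝ)) •
            (ω : EuclideanSpace ℝ (Fin (N + 1)))) (2 * ρ)) := by
        rw [finrank_euclideanSpace_fin]
        push_cast
        exact mul_le_mul' le_rfl ((measure_mono hcover).trans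
          (measure_biUnion_finset_le _ _))
    _ = (N + 1 : ℝ≥0∞) * ((n + 1 : ℕ) * (ENNReal.ofReal ((2 * ρ) ^ (N + 1)) *
          volume (Metric.ball (0 : EuclideanSpace ℝ (Fin (N + 1))) 1))) := by
        congr 1
        rw [Finset.sum_congr rfl (fun k _ => ?_), Finset.sum_const, Finset.card_range,
          nsmul_eq_mul]
        rw [Measure.addHaar_closedBall _ _ (by positivity), finrank_euclideanSpace_fin]
    _ ≤ capC N * ENNReal.ofReal (ρ ^ N) := by
        rw [capC]
        have key : ((n + 1 : ℕ) : ℝ≥0∞) * ENNReal.ofReal ((2 * ρ) ^ (N + 1)) ≤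
            ENNReal.ofReal (3 * 2 ^ (N + 1)) * ENNReal.ofReal (ρ ^ N) := by
          rw [← ENNReal.ofReal_natCast, ← ENNReal.ofReal_mul (by positivity),
            ← ENNReal.ofReal_mul (by positivity)]
          refine ENNReal.ofReal_le_ofReal ?_
          have hnceil : (n : ℝ) < 1 / ρ + 1 := Nat.ceil_lt_add_one (by positivity)
          have h3 : ((n + 1 : ℕ) : ℝ) ≤ 3 / ρ := by
            push_cast
            rw [le_div_iff₀ hρ0]
            have h2ρ : 2 * ρ ≤ 2 := by linarith
            have hmul : (n : ℝ) * ρ < (1 / ρ + 1) * ρ := mul_lt_mul_of_pos_right hnceil hρ0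
            have hinv : (1 / ρ) * ρ = 1 := by field_simp
            nlinarith
          calc ((n + 1 : ℕ) : ℝ) * (2 * ρ) ^ (N + 1) ≤ (3 / ρ) * (2 * ρ) ^ (N + 1) := by
                gcongr
            _ = 3 * 2 ^ (N + 1) * ρ ^ N := by
                rw [mul_pow, pow_succ ρ N]
                field_simp
          done
        calc (N + 1 : ℝ≥0∞) * ((n + 1 : ℕ) * (ENNReal.ofReal ((2 * ρ) ^ (N + 1)) *
              volume (Metric.ball (0 : EuclideanSpace ℝ (Fin (N + 1))) 1)))
            = (N + 1 : ℝ≥0∞) * (((n + 1 : ℕ) : ℝ≥0∞) * ENNReal.ofReal ((2 * ρ) ^ (N + 1))) *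
              volume (Metric.ball (0 : EuclideanSpace ℝ (Fin (N + 1))) 1) := by ring
          _ ≤ (N + 1 : ℝ≥0∞) * (ENNReal.ofReal (3 * 2 ^ (N + 1)) * ENNReal.ofReal (ρ ^ N)) *
              volume (Metric.ball (0 : EuclideanSpace ℝ (Fin (N + 1))) 1) := by
              gcongr
          _ = (N + 1 : ℝ≥0∞) * ENNReal.ofReal (3 * 2 ^ (N + 1)) *
              volume (Metric.ball (0 : EuclideanSpace ℝ (Fin (N + 1))) 1) *
              ENNReal.ofReal (ρ ^ N) := by ring


lemma kernel_tail (N : ℕ) {s : ℝ} (hs0 : 0 < s) (hN : 2 * s < (N : ℝ))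
    (ω : sphere (0 : EuclideanSpace ℝ (Fin (N + 1))) 1)
    {A : Set (sphere (0 : EuclideanSpace ℝ (Fin (N + 1))) 1)}
    {T : ℝ} (hT : 1 ≤ T) :
    ∫⁻ η in A, ENNReal.ofReal
        (‖(ω : EuclideanSpace ℝ (Fin (N + 1))) - (η : EuclideanSpace ℝ (Fin (N + 1)))‖ ^
          (-((N : ℝ) - 2 * s)))
        ∂(volume : Measure (EuclideanSpace ℝ (Fin (N + 1)))).toSphere ≤
      ENNReal.ofReal T * (volume : Measure (EuclideanSpace ℝ (Fin (N + 1)))).toSphere A +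
        capC N * ENNReal.ofReal
          (T ^ (1 - (N : ℝ) / ((N : ℝ) - 2 * s)) / ((N : ℝ) / ((N : ℝ) - 2 * s) - 1)) := by
  set μ := (volume : Measure (EuclideanSpace ℝ (Fin (N + 1)))).toSphere with hμ
  set α : ℝ := (N : ℝ) - 2 * s with hα
  have hα0 : 0 < α := by simp only [hα]; linarith
  have hαN : α < N := by simp only [hα]; linarith
  have hN0 : (0 : ℝ) < N := lt_trans (by linarith) hαN
  set β : ℝ := (N : ℝ) / α with hβ
  have hβ1 : 1 < β := (one_lt_div hα0).mpr hαN
  have hT0 : (0 : ℝ) < T := lt_of_lt_of_le one_pos hT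
  set f : sphere (0 : EuclideanSpace ℝ (Fin (N + 1))) 1 → ℝ := fun η =>
    ‖(ω : EuclideanSpace ℝ (Fin (N + 1))) - (η : EuclideanSpace ℝ (Fin (N + 1)))‖ ^ (-α) with hf
  have hfm : Measurable f := by fun_prop
  have hfnn : ∀ η, 0 ≤ f η := fun η => Real.rpow_nonneg (norm_nonneg _) _
  rw [lintegral_eq_lintegral_meas_le (μ.restrict A) (Filter.Eventually.of_forall hfnn)
    hfm.aemeasurable]
  have hsplit : Ioi (0 : ℝ) = Ioc 0 T ∪ Ioi T := (Ioc_union_Ioi_eq_Ioi hT0.le).symm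
  rw [hsplit, lintegral_union measurableSet_Ioi (Ioc_disjoint_Ioi le_rfl)]
  have term1 : ∫⁻ t in Ioc (0 : ℝ) T, (μ.restrict A) {a | t ≤ f a} ≤
      ENNReal.ofReal T * μ A := by
    calc ∫⁻ t in Ioc (0 : ℝ) T, (μ.restrict A) {a | t ≤ f a}
        ≤ ∫⁻ _ in Ioc (0 : ℝ) T, μ A := by
          refine setLIntegral_mono' measurableSet_Ioc fun t _ => ?_
          calc (μ.restrict A) {a | t ≤ f a} ≤ (μ.restrict A) univ := measure_mono (subset_univ _)
            _ = μ A := by rw [Measure.restrict_apply_univ]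
      _ = ENNReal.ofReal T * μ A := by
          rw [setLIntegral_const, Real.volume_Ioc, sub_zero, mul_comm]
  have term2 : ∫⁻ t in Ioi T, (μ.restrict A) {a | t ≤ f a} ≤
      capC N * ENNReal.ofReal (T ^ (1 - β) / (β - 1)) := by
    have step : ∀ t ∈ Ioi T, (μ.restrict A) {a | t ≤ f a} ≤
        capC N * ENNReal.ofReal (t ^ (-β)) := by
      intro t ht
      have ht1 : 1 < t := lt_of_le_of_lt hT ht
      have ht0 : (0 : ℝ) < t := lt_trans one_pos ht1
      have hsub : {a | t ≤ f a} ⊆ {η : sphere (0 : EuclideanSpace ℝ (Fin (N + 1))) 1 |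
          ‖(η : EuclideanSpace ℝ (Fin (N + 1))) - (ω : EuclideanSpace ℝ (Fin (N + 1)))‖ ≤
            t ^ (-α⁻¹)} := by
        intro η hη
        have hη' : t ≤ f η := hη
        set d : ℝ := ‖(ω : EuclideanSpace ℝ (Fin (N + 1))) -
          (η : EuclideanSpace ℝ (Fin (N + 1)))‖ with hd
        have hdne : d ≠ 0 := by
          intro h0
          have hfη : f η = 0 := by
            have : f η = d ^ (-α) := rfl
            rw [this, h0, Real.zero_rpow (neg_ne_zero.mpr hα0.ne')]
          rw [hfη] at hη'
          linarith
        have hd0 : 0 < d := lt_of_le_of_ne (norm_nonneg _) (Ne.symm hdne)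
        have key : (d ^ (-α)) ^ (-α⁻¹) ≤ t ^ (-α⁻¹) :=
          Real.rpow_le_rpow_of_nonpos ht0 hη' (by positivity |> neg_nonpos_of_nonneg)
        have keyl : (d ^ (-α)) ^ (-α⁻¹) = d := by
          rw [← Real.rpow_mul hd0.le, show (-α) * (-α⁻¹) = 1 from by
            field_simp, Real.rpow_one]
        show ‖(η : EuclideanSpace ℝ (Fin (N + 1))) - (ω : EuclideanSpace ℝ (Fin (N + 1)))‖ ≤
          t ^ (-α⁻¹)
        rw [norm_sub_rev]
        rw [keyl] at key
        exact key
      have hρ0 : (0 : ℝ) < t ^ (-α⁻¹) := Real.rpow_pos_of_pos ht0 _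
      have hρ1 : t ^ (-α⁻¹) ≤ 1 :=
        Real.rpow_le_one_of_one_le_of_nonpos ht1.le (by positivity |> neg_nonpos_of_nonneg)
      calc (μ.restrict A) {a | t ≤ f a} ≤ μ {a | t ≤ f a} := Measure.restrict_apply_le _ _
        _ ≤ μ _ := measure_mono hsub
        _ ≤ capC N * ENNReal.ofReal ((t ^ (-α⁻¹)) ^ N) := cap_bound N ω hρ0 hρ1
        _ = capC N * ENNReal.ofReal (t ^ (-β)) := by
            congr 1
            rw [← Real.rpow_natCast (t ^ (-α⁻¹)) N, ← Real.rpow_mul ht0.le]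
            congr 1
            rw [hβ]
            field_simp
    calc ∫⁻ t in Ioi T, (μ.restrict A) {a | t ≤ f a}
        ≤ ∫⁻ t in Ioi T, capC N * ENNReal.ofReal (t ^ (-β)) :=
          setLIntegral_mono' measurableSet_Ioi step
      _ = capC N * ∫⁻ t in Ioi T, ENNReal.ofReal (t ^ (-β)) := by
          rw [lintegral_const_mul _ (by fun_prop)]
      _ = capC N * ENNReal.ofReal (T ^ (1 - β) / (β - 1)) := by
          congr 1
          have hβ' : -β < -1 := by linarith
          have hint : IntegrableOn (fun t : ℝ => t ^ (-β)) (Ioi T) :=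
            integrableOn_Ioi_rpow_of_lt hβ' hT0
          rw [← ofReal_integral_eq_lintegral_ofReal hint ?_]
          · rw [integral_Ioi_rpow_of_lt hβ' hT0]
            congr 1
            rw [show (-β + 1 : ℝ) = -(β - 1) by ring, show (1 - β : ℝ) = -(β - 1) by ring,
              neg_div, div_neg, neg_neg]
          · filter_upwards [ae_restrict_mem measurableSet_Ioi] with t ht
            exact Real.rpow_nonneg (le_of_lt (lt_trans hT0 ht)) _
  exact add_le_add term1 term2


noncomputable def smallC (N : ℕ) (s : ℝ) : ℝ≥0∞ :=
  capC N * (1 + ENNReal.ofReal (1 / ((N : ℝ) / ((N : ℝ) - 2 * s) - 1)))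

lemma smallC_lt_top (N : ℕ) (s : ℝ) : smallC N s < ∞ :=
  ENNReal.mul_lt_top (capC_lt_top N) (by
    exact ENNReal.add_lt_top.mpr ⟨ENNReal.one_lt_top, ENNReal.ofReal_lt_top⟩)

lemma kernel_small (N : ℕ) {s : ℝ} (hs0 : 0 < s) (hN : 2 * s < (N : ℝ))
    (ω ω₀ : sphere (0 : EuclideanSpace ℝ (Fin (N + 1))) 1) {δ : ℝ}
    (hδ0 : 0 < δ) (hδ1 : δ ≤ 1) :
    ∫⁻ η in {η : sphere (0 : EuclideanSpace ℝ (Fin (N + 1))) 1 |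
        ‖(η : EuclideanSpace ℝ (Fin (N + 1))) - (ω₀ : EuclideanSpace ℝ (Fin (N + 1)))‖ ≤ δ},
      ENNReal.ofReal
        (‖(ω : EuclideanSpace ℝ (Fin (N + 1))) - (η : EuclideanSpace ℝ (Fin (N + 1)))‖ ^
          (-((N : ℝ) - 2 * s)))
        ∂(volume : Measure (EuclideanSpace ℝ (Fin (N + 1)))).toSphere ≤
      smallC N s * ENNReal.ofReal (δ ^ (2 * s)) := by
  set α : ℝ := (N : ℝ) - 2 * s with hα
  have hα0 : 0 < α := by simp only [hα]; linarith
  have hαN : α < N := by simp only [hα]; linarith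
  set β : ℝ := (N : ℝ) / α with hβ
  have hβ1 : 1 < β := (one_lt_div hα0).mpr hαN
  have hT : 1 ≤ δ ^ (-α) :=
    Real.one_le_rpow_of_pos_of_le_one_of_nonpos hδ0 hδ1 (neg_nonpos_of_nonneg hα0.le)
  refine (kernel_tail N hs0 hN ω hT).trans ?_
  have e1 : ENNReal.ofReal (δ ^ (-α)) *
      (volume : Measure (EuclideanSpace ℝ (Fin (N + 1)))).toSphere
        {η : sphere (0 : EuclideanSpace ℝ (Fin (N + 1))) 1 |
          ‖(η : EuclideanSpace ℝ (Fin (N + 1))) - (ω₀ : EuclideanSpace ℝ (Fin (N + 1)))‖ ≤ δ} ≤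
      capC N * ENNReal.ofReal (δ ^ (2 * s)) := by
    refine le_trans (mul_le_mul' le_rfl (cap_bound N ω₀ hδ0 hδ1)) ?_
    rw [← mul_assoc, mul_comm (ENNReal.ofReal (δ ^ (-α))) (capC N), mul_assoc]
    refine mul_le_mul' le_rfl ?_
    rw [← ENNReal.ofReal_mul (by positivity)]
    refine ENNReal.ofReal_le_ofReal (le_of_eq ?_)
    rw [← Real.rpow_natCast δ N, ← Real.rpow_add hδ0]
    congr 1
    simp only [hα]; ring
  have e2 : capC N * ENNReal.ofReal ((δ ^ (-α)) ^ (1 - β) / (β - 1)) =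
      capC N * ENNReal.ofReal (1 / (β - 1)) * ENNReal.ofReal (δ ^ (2 * s)) := by
    rw [← Real.rpow_mul hδ0.le]
    have hexp : -α * (1 - β) = 2 * s := by
      have : α * β = N := by rw [hβ]; field_simp
      simp only [hα] at this ⊢
      nlinarith [this]
    rw [hexp, div_eq_mul_one_div, ENNReal.ofReal_mul (by positivity), mul_assoc,
      mul_comm (ENNReal.ofReal (δ ^ (2 * s))), ← mul_assoc]
  calc _ ≤ capC N * ENNReal.ofReal (δ ^ (2 * s)) +
        capC N * ENNReal.ofReal (1 / (β - 1)) * ENNReal.ofReal (δ ^ (2 * s)) := by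
        rw [← e2]; exact add_le_add e1 le_rfl
    _ = smallC N s * ENNReal.ofReal (δ ^ (2 * s)) := by
        rw [smallC, ← hα, ← hβ]; ring

lemma kernel_finite (N : ℕ) {s : ℝ} (hs0 : 0 < s) (hN : 2 * s < (N : ℝ))
    (ω : sphere (0 : EuclideanSpace ℝ (Fin (N + 1))) 1) :
    ∫⁻ η, ENNReal.ofReal
        (‖(ω : EuclideanSpace ℝ (Fin (N + 1))) - (η : EuclideanSpace ℝ (Fin (N + 1)))‖ ^
          (-((N : ℝ) - 2 * s)))
        ∂(volume : Measure (EuclideanSpace ℝ (Fin (N + 1)))).toSphere < ∞ := by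
  have := kernel_tail N hs0 hN ω (A := univ) (T := 1) le_rfl
  rw [Measure.restrict_univ] at this
  refine lt_of_le_of_lt this ?_
  exact ENNReal.add_lt_top.mpr ⟨ENNReal.mul_lt_top ENNReal.ofReal_lt_top
    (measure_lt_top _ _), ENNReal.mul_lt_top (capC_lt_top N) ENNReal.ofReal_lt_top⟩

lemma rpow_neg_lip {α c : ℝ} (hα : 0 < α) (hc : 0 < c) {x y : ℝ} (hx : c ≤ x) (hy : c ≤ y) :
    |x ^ (-α) - y ^ (-α)| ≤ α * c ^ (-α - 1) * |x - y| := by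
  have hder : ∀ z ∈ Ici c, HasDerivWithinAt (fun u : ℝ => u ^ (-α))
      (-α * z ^ (-α - 1)) (Ici c) z := fun z hz =>
    (Real.hasDerivAt_rpow_const (Or.inl (lt_of_lt_of_le hc hz).ne')).hasDerivWithinAt
  have bound : ∀ z ∈ Ici c, ‖-α * z ^ (-α - 1)‖ ≤ α * c ^ (-α - 1) := by
    intro z hz
    have hz0 : 0 < z := lt_of_lt_of_le hc hz
    rw [norm_mul, Real.norm_eq_abs, Real.norm_eq_abs, abs_neg, abs_of_pos hα,
      abs_of_pos (Real.rpow_pos_of_pos hz0 _)]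
    exact mul_le_mul_of_nonneg_left
      (Real.rpow_le_rpow_of_nonpos hc hz (by linarith)) hα.le
  have := Convex.norm_image_sub_le_of_norm_hasDerivWithin_le hder bound (convex_Ici c) hy hx
  simpa [Real.norm_eq_abs] using this


lemma integrable_ker (N : ℕ) {s : ℝ} (hs0 : 0 < s) (hN : 2 * s < (N : ℝ))
    (ω : sphere (0 : EuclideanSpace ℝ (Fin (N + 1))) 1)
    (h : sphere (0 : EuclideanSpace ℝ (Fin (N + 1))) 1 → ℝ) (hm : Measurable h)
    {M : ℝ} (hM : ∀ ω', |h ω'| ≤ M) :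
    Integrable (fun η : sphere (0 : EuclideanSpace ℝ (Fin (N + 1))) 1 =>
        ‖(ω : EuclideanSpace ℝ (Fin (N + 1))) - (η : EuclideanSpace ℝ (Fin (N + 1)))‖ ^
          (-((N : ℝ) - 2 * s)) * h η)
      (volume : Measure (EuclideanSpace ℝ (Fin (N + 1)))).toSphere := by
  have hKm : Measurable (fun η : sphere (0 : EuclideanSpace ℝ (Fin (N + 1))) 1 =>
      ‖(ω : EuclideanSpace ℝ (Fin (N + 1))) - (η : EuclideanSpace ℝ (Fin (N + 1)))‖ ^
        (-((N : ℝ) - 2 * s))) := by fun_prop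
  refine ⟨(hKm.mul hm).aestronglyMeasurable, ?_⟩
  rw [hasFiniteIntegral_iff_norm]
  have hpt : ∀ η : sphere (0 : EuclideanSpace ℝ (Fin (N + 1))) 1,
      ENNReal.ofReal ‖‖(ω : EuclideanSpace ℝ (Fin (N + 1))) -
          (η : EuclideanSpace ℝ (Fin (N + 1)))‖ ^ (-((N : ℝ) - 2 * s)) * h η‖ ≤
        ENNReal.ofReal (‖(ω : EuclideanSpace ℝ (Fin (N + 1))) -
          (η : EuclideanSpace ℝ (Fin (N + 1)))‖ ^ (-((N : ℝ) - 2 * s))) * ENNReal.ofReal M := by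
    intro η
    rw [← ENNReal.ofReal_mul (Real.rpow_nonneg (norm_nonneg _) _)]
    refine ENNReal.ofReal_le_ofReal ?_
    rw [Real.norm_eq_abs, abs_mul, abs_of_nonneg (Real.rpow_nonneg (norm_nonneg _) _)]
    exact mul_le_mul_of_nonneg_left (hM η) (Real.rpow_nonneg (norm_nonneg _) _)
  refine lt_of_le_of_lt (lintegral_mono hpt) ?_
  rw [lintegral_mul_const _ (by fun_prop)]
  exact ENNReal.mul_lt_top (kernel_finite N hs0 hN ω) ENNReal.ofReal_lt_top

lemma g0_continuous (N : ℕ) {s : ℝ} (hs0 : 0 < s) (hN : 2 * s < (N : ℝ))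
    (h : sphere (0 : EuclideanSpace ℝ (Fin (N + 1))) 1 → ℝ) (hm : Measurable h)
    {M : ℝ} (hM : ∀ ω', |h ω'| ≤ M) (hM0 : 0 ≤ M) :
    Continuous fun ω : sphere (0 : EuclideanSpace ℝ (Fin (N + 1))) 1 =>
      ∫ η, ‖(ω : EuclideanSpace ℝ (Fin (N + 1))) - (η : EuclideanSpace ℝ (Fin (N + 1)))‖ ^
          (-((N : ℝ) - 2 * s)) * h η
        ∂(volume : Measure (EuclideanSpace ℝ (Fin (N + 1)))).toSphere := by
  set μ := (volume : Measure (EuclideanSpace ℝ (Fin (N + 1)))).toSphere with hμdef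
  set α : ℝ := (N : ℝ) - 2 * s with hα
  have hα0 : 0 < α := by simp only [hα]; linarith
  set K : sphere (0 : EuclideanSpace ℝ (Fin (N + 1))) 1 →
      sphere (0 : EuclideanSpace ℝ (Fin (N + 1))) 1 → ℝ := fun ω η =>
    ‖(ω : EuclideanSpace ℝ (Fin (N + 1))) - (η : EuclideanSpace ℝ (Fin (N + 1)))‖ ^ (-α) with hK
  rw [Metric.continuous_iff]
  intro ω₀ ε hε
  -- choose δ
  set c₁ : ℝ := 2 * M * (smallC N s).toReal with hc₁
  have hc₁0 : 0 ≤ c₁ := by positivity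
  set r : ℝ := ε / 2 / (c₁ + 1) with hr
  have hr0 : 0 < r := by positivity
  set δ : ℝ := min 1 (r ^ (2 * s)⁻¹) with hδ
  have hδ0 : 0 < δ := lt_min one_pos (Real.rpow_pos_of_pos hr0 _)
  have hδ1 : δ ≤ 1 := min_le_left _ _
  have hδr : δ ^ (2 * s) ≤ r := by
    calc δ ^ (2 * s) ≤ (r ^ (2 * s)⁻¹) ^ (2 * s) :=
          Real.rpow_le_rpow hδ0.le (min_le_right _ _) (by positivity)
      _ = r := by
          rw [← Real.rpow_mul hr0.le, inv_mul_cancel₀ (by positivity), Real.rpow_one]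
  have hsmall : c₁ * δ ^ (2 * s) < ε / 2 := by
    have h1 : c₁ * δ ^ (2 * s) ≤ c₁ * r := mul_le_mul_of_nonneg_left hδr hc₁0
    have hfrac : c₁ / (c₁ + 1) < 1 := (div_lt_one (by positivity)).mpr (by linarith)
    have h2 : c₁ * r < ε / 2 := by
      have e : c₁ * r = ε / 2 * (c₁ / (c₁ + 1)) := by rw [hr]; ring
      rw [e]; nlinarith
    linarith
  set Lδ : ℝ := α * (δ / 2) ^ (-α - 1) with hLδ
  have hLδ0 : 0 < Lδ := by
    have := Real.rpow_pos_of_pos (half_pos hδ0) (-α - 1)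
    positivity
  set m₀ : ℝ := (μ univ).toReal with hm₀
  have hm₀0 : 0 ≤ m₀ := ENNReal.toReal_nonneg
  set sc : ℝ := (smallC N s).toReal with hsc
  have hsc0 : 0 ≤ sc := ENNReal.toReal_nonneg
  have hscof : smallC N s = ENNReal.ofReal sc :=
    (ENNReal.ofReal_toReal (smallC_lt_top N s).ne).symm
  have hμof : μ univ = ENNReal.ofReal m₀ :=
    (ENNReal.ofReal_toReal (measure_ne_top μ univ)).symm
  set c₂ : ℝ := M * m₀ * Lδ with hc₂
  have hc₂0 : 0 ≤ c₂ := by positivity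
  set δ' : ℝ := min (δ / 2) (ε / 2 / (c₂ + 1)) with hδ'
  have hδ'0 : 0 < δ' := lt_min (by positivity) (by positivity)
  refine ⟨δ', hδ'0, fun ω hdist => ?_⟩
  have hIω := integrable_ker N hs0 hN ω h hm hM
  have hIω₀ := integrable_ker N hs0 hN ω₀ h hm hM
  have hsubint : (∫ η, K ω η * h η ∂μ) - ∫ η, K ω₀ η * h η ∂μ =
      ∫ η, (K ω η - K ω₀ η) * h η ∂μ := by
    rw [← integral_sub hIω hIω₀]
    congr 1
    ext η
    ring
  rw [Real.dist_eq]
  show |(∫ η, K ω η * h η ∂μ) - ∫ η, K ω₀ η * h η ∂μ| < ε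
  rw [hsubint]
  set J : ℝ≥0∞ := ∫⁻ η, ENNReal.ofReal ‖(K ω η - K ω₀ η) * h η‖ ∂μ with hJ
  have habs : |∫ η, (K ω η - K ω₀ η) * h η ∂μ| ≤ J.toReal := by
    rw [← Real.norm_eq_abs]
    exact norm_integral_le_lintegral_norm _
  set cap : Set (sphere (0 : EuclideanSpace ℝ (Fin (N + 1))) 1) :=
    {η : sphere (0 : EuclideanSpace ℝ (Fin (N + 1))) 1 |
      ‖(η : EuclideanSpace ℝ (Fin (N + 1))) - (ω₀ : EuclideanSpace ℝ (Fin (N + 1)))‖ ≤ δ}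
    with hcap
  have hcapm : MeasurableSet cap := by
    refine (isClosed_le ?_ continuous_const).measurableSet
    exact (continuous_subtype_val.sub continuous_const).norm
  have hdist2 : dist ω ω₀ ≤ δ / 2 := le_trans hdist.le (min_le_left _ _)
  have hdist_norm : ‖(ω : EuclideanSpace ℝ (Fin (N + 1))) -
      (ω₀ : EuclideanSpace ℝ (Fin (N + 1)))‖ = dist ω ω₀ := by
    rw [Subtype.dist_eq, dist_eq_norm]
  have hJle : J ≤ ENNReal.ofReal (c₁ * δ ^ (2 * s) + c₂ * dist ω ω₀) := by
    rw [hJ, ← lintegral_add_compl (fun η => ENNReal.ofReal ‖(K ω η - K ω₀ η) * h η‖) hcapm,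
      ENNReal.ofReal_add (by positivity) (by positivity)]
    refine add_le_add ?_ ?_
    · -- cap part
      have hpt : ∀ η ∈ cap, ENNReal.ofReal ‖(K ω η - K ω₀ η) * h η‖ ≤
          ENNReal.ofReal M * (ENNReal.ofReal (K ω η) + ENNReal.ofReal (K ω₀ η)) := by
        intro η _
        have hKnn : 0 ≤ K ω η := Real.rpow_nonneg (norm_nonneg _) _
        have hKnn' : 0 ≤ K ω₀ η := Real.rpow_nonneg (norm_nonneg _) _
        rw [← ENNReal.ofReal_add hKnn hKnn', ← ENNReal.ofReal_mul hM0]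
        refine ENNReal.ofReal_le_ofReal ?_
        rw [Real.norm_eq_abs, abs_mul]
        have h1 : |K ω η - K ω₀ η| ≤ K ω η + K ω₀ η := by
          refine (abs_sub _ _).trans ?_
          rw [abs_of_nonneg hKnn, abs_of_nonneg hKnn']
        calc |K ω η - K ω₀ η| * |h η| ≤ (K ω η + K ω₀ η) * M :=
              mul_le_mul h1 (hM η) (abs_nonneg _) (by positivity)
          _ = M * (K ω η + K ω₀ η) := mul_comm _ _
      calc ∫⁻ η in cap, ENNReal.ofReal ‖(K ω η - K ω₀ η) * h η‖ ∂μ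
          ≤ ∫⁻ η in cap, ENNReal.ofReal M *
              (ENNReal.ofReal (K ω η) + ENNReal.ofReal (K ω₀ η)) ∂μ :=
            setLIntegral_mono' hcapm hpt
        _ = ENNReal.ofReal M * ((∫⁻ η in cap, ENNReal.ofReal (K ω η) ∂μ) +
              ∫⁻ η in cap, ENNReal.ofReal (K ω₀ η) ∂μ) := by
            rw [lintegral_const_mul _ (by fun_prop), lintegral_add_left (by fun_prop)]
        _ ≤ ENNReal.ofReal M * (smallC N s * ENNReal.ofReal (δ ^ (2 * s)) +
              smallC N s * ENNReal.ofReal (δ ^ (2 * s))) := by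
            refine mul_le_mul' le_rfl (add_le_add ?_ ?_)
            · exact kernel_small N hs0 hN ω ω₀ hδ0 hδ1
            · exact kernel_small N hs0 hN ω₀ ω₀ hδ0 hδ1
        _ = ENNReal.ofReal (c₁ * δ ^ (2 * s)) := by
            rw [hscof, ← ENNReal.ofReal_mul hsc0, ← ENNReal.ofReal_add (by positivity)
              (by positivity), ← ENNReal.ofReal_mul hM0]
            congr 1
            rw [hc₁]
            ring
    · -- far part
      have hpt : ∀ η ∈ capᶜ, ENNReal.ofReal ‖(K ω η - K ω₀ η) * h η‖ ≤
          ENNReal.ofReal (M * (Lδ * dist ω ω₀)) := by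
        intro η hη
        have hb : δ < ‖(ω₀ : EuclideanSpace ℝ (Fin (N + 1))) -
            (η : EuclideanSpace ℝ (Fin (N + 1)))‖ := by
          rw [norm_sub_rev]
          exact not_le.mp hη
        have ha : δ / 2 ≤ ‖(ω : EuclideanSpace ℝ (Fin (N + 1))) -
            (η : EuclideanSpace ℝ (Fin (N + 1)))‖ := by
          have htri : ‖(ω₀ : EuclideanSpace ℝ (Fin (N + 1))) -
              (η : EuclideanSpace ℝ (Fin (N + 1)))‖ ≤
              ‖(ω₀ : EuclideanSpace ℝ (Fin (N + 1))) -
                (ω : EuclideanSpace ℝ (Fin (N + 1)))‖ +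
              ‖(ω : EuclideanSpace ℝ (Fin (N + 1))) -
                (η : EuclideanSpace ℝ (Fin (N + 1)))‖ := by
            have : (ω₀ : EuclideanSpace ℝ (Fin (N + 1))) - η =
                ((ω₀ : EuclideanSpace ℝ (Fin (N + 1))) - ω) +
                ((ω : EuclideanSpace ℝ (Fin (N + 1))) - η) := by abel
            rw [this]
            exact norm_add_le _ _
          have : ‖(ω₀ : EuclideanSpace ℝ (Fin (N + 1))) -
              (ω : EuclideanSpace ℝ (Fin (N + 1)))‖ ≤ δ / 2 := by
            rw [norm_sub_rev, hdist_norm]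
            exact hdist2
          linarith
        have hlip := rpow_neg_lip hα0 (half_pos hδ0) ha
          (le_trans (half_le_self hδ0.le) hb.le)
        have hab : |‖(ω : EuclideanSpace ℝ (Fin (N + 1))) -
            (η : EuclideanSpace ℝ (Fin (N + 1)))‖ -
            ‖(ω₀ : EuclideanSpace ℝ (Fin (N + 1))) -
              (η : EuclideanSpace ℝ (Fin (N + 1)))‖| ≤ dist ω ω₀ := by
          refine le_trans (abs_norm_sub_norm_le _ _) ?_
          have : ((ω : EuclideanSpace ℝ (Fin (N + 1))) - η) -
              ((ω₀ : EuclideanSpace ℝ (Fin (N + 1))) - η) =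
              (ω : EuclideanSpace ℝ (Fin (N + 1))) - ω₀ := by abel
          rw [this, hdist_norm]
        refine ENNReal.ofReal_le_ofReal ?_
        rw [Real.norm_eq_abs, abs_mul]
        have hKd : |K ω η - K ω₀ η| ≤ Lδ * dist ω ω₀ := by
          refine le_trans hlip ?_
          rw [← hLδ]
          exact mul_le_mul_of_nonneg_left hab hLδ0.le
        calc |K ω η - K ω₀ η| * |h η| ≤ (Lδ * dist ω ω₀) * M :=
              mul_le_mul hKd (hM η) (abs_nonneg _) (by positivity)
          _ = M * (Lδ * dist ω ω₀) := mul_comm _ _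
      calc ∫⁻ η in capᶜ, ENNReal.ofReal ‖(K ω η - K ω₀ η) * h η‖ ∂μ
          ≤ ∫⁻ _ in capᶜ, ENNReal.ofReal (M * (Lδ * dist ω ω₀)) ∂μ :=
            setLIntegral_mono' hcapm.compl hpt
        _ = ENNReal.ofReal (M * (Lδ * dist ω ω₀)) * μ capᶜ := setLIntegral_const _ _
        _ ≤ ENNReal.ofReal (M * (Lδ * dist ω ω₀)) * μ univ :=
            mul_le_mul' le_rfl (measure_mono (subset_univ _))
        _ = ENNReal.ofReal (c₂ * dist ω ω₀) := by
            rw [hμof, ← ENNReal.ofReal_mul (by positivity)]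
            congr 1
            rw [hc₂]
            ring
  have hfar : c₂ * dist ω ω₀ < ε / 2 := by
    have hd' : dist ω ω₀ ≤ ε / 2 / (c₂ + 1) := le_trans hdist.le (min_le_right _ _)
    have h1 : c₂ * dist ω ω₀ ≤ c₂ * (ε / 2 / (c₂ + 1)) :=
      mul_le_mul_of_nonneg_left hd' hc₂0
    have hfrac : c₂ / (c₂ + 1) < 1 := (div_lt_one (by positivity)).mpr (by linarith)
    have e : c₂ * (ε / 2 / (c₂ + 1)) = ε / 2 * (c₂ / (c₂ + 1)) := by ring
    nlinarith
  calc |∫ η, (K ω η - K ω₀ η) * h η ∂μ| ≤ J.toReal := habs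
    _ ≤ (ENNReal.ofReal (c₁ * δ ^ (2 * s) + c₂ * dist ω ω₀)).toReal :=
        ENNReal.toReal_mono ENNReal.ofReal_ne_top hJle
    _ = c₁ * δ ^ (2 * s) + c₂ * dist ω ω₀ := ENNReal.toReal_ofReal (by positivity)
    _ < ε / 2 + ε / 2 := by exact add_lt_add hsmall hfar
    _ = ε := by ring


/-- A bounded measurable solution of the eigenvalue integral equation
`a h(ω) = ∫_{S^N} |ω−η|^{−(N−2s)} h(η) dη` agrees a.e. with a continuous function. -/
theorem eigenfunction_continuous (N : ℕ) (hN1 : 1 ≤ N) (s : ℝ) (hs0 : 0 < s)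
    (hs1 : s < 1) (hN : 2 * s < (N : ℝ)) (a : ℝ) (ha : a ≠ 0)
    (h : sphere (0 : EuclideanSpace ℝ (Fin (N + 1))) 1 → ℝ) (hm : Measurable h)
    (hb : ∃ M : ℝ, ∀ ω, |h ω| ≤ M)
    (heq : ∀ᵐ ω ∂(volume : Measure (EuclideanSpace ℝ (Fin (N + 1)))).toSphere,
      a * h ω = ∫ η,
        ‖(ω : EuclideanSpace ℝ (Fin (N + 1))) - (η : EuclideanSpace ℝ (Fin (N + 1)))‖ ^
            (-((N : ℝ) - 2 * s)) * h η
        ∂(volume : Measure (EuclideanSpace ℝ (Fin (N + 1)))).toSphere) :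
    ∃ g : C(sphere (0 : EuclideanSpace ℝ (Fin (N + 1))) 1, ℝ),
      h =ᵐ[(volume : Measure (EuclideanSpace ℝ (Fin (N + 1)))).toSphere] fun ω => g ω := by
  obtain ⟨M, hM⟩ := hb
  have hne : Nonempty (sphere (0 : EuclideanSpace ℝ (Fin (N + 1))) 1) :=
    (NormedSpace.sphere_nonempty.mpr zero_le_one).to_subtype
  have hM0 : 0 ≤ M := by
    obtain ⟨ω⟩ := hne
    exact le_trans (abs_nonneg _) (hM ω)
  have hcont := g0_continuous N hs0 hN h hm hM hM0
  refine ⟨⟨fun ω => a⁻¹ * ∫ η,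
      ‖(ω : EuclideanSpace ℝ (Fin (N + 1))) - (η : EuclideanSpace ℝ (Fin (N + 1)))‖ ^
        (-((N : ℝ) - 2 * s)) * h η
      ∂(volume : Measure (EuclideanSpace ℝ (Fin (N + 1)))).toSphere,
    continuous_const.mul hcont⟩, ?_⟩
  filter_upwards [heq] with ω hω
  show h ω = a⁻¹ * _
  rw [← hω, inv_mul_cancel_left₀ ha]
end
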